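/- (Lemma: B-invariants on 𝔟*.) Let B_n act on 𝔟*_n by b·s = π(b s b^{−1}). Then a polynomial function F on 𝔟*_n (the lower triangular n×n complex matrices) is B_n-invariant if and only if there is a single-variable polynomial g with F(s) = g(tr(s)) for every lower triangular matrix s; that is, ℂ[𝔟*]^B = ℂ[tr(s)]. -/

import Mathlib

/-- `M` is an upper triangular complex matrix. -/
def IsUT {n : ℕ} (M : Matrix (Fin n) (Fin n) ℂ) : Prop :=
  ∀ i j : Fin n, j < i → M i j = 0

/-- `M` is a lower triangular complex matrix (the chosen representatives of
`𝔟*ₙ = 𝔤𝔩ₙ/𝔫⁺`). -/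
def IsLT {n : ℕ} (M : Matrix (Fin n) (Fin n) ℂ) : Prop :=
  ∀ i j : Fin n, i < j → M i j = 0

/-- The projection `π : 𝔤𝔩ₙ → 𝔟*ₙ` zeroing out all entries strictly above the
diagonal. -/
def lowProj {n : ℕ} (M : Matrix (Fin n) (Fin n) ℂ) : Matrix (Fin n) (Fin n) ℂ :=
  Matrix.of fun i j => if j ≤ i then M i j else 0

open Matrix MvPolynomial

lemma lowProj_eq_of_isLT {n : ℕ} {M : Matrix (Fin n) (Fin n) ℂ} (h : IsLT M) :
    lowProj M = M := by
  ext i j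
  simp only [lowProj, of_apply]
  split
  · rfl
  · exact (h i j (lt_of_not_ge ‹¬ j ≤ i›)).symm

lemma isLT_lowProj {n : ℕ} (M : Matrix (Fin n) (Fin n) ℂ) : IsLT (lowProj M) := by
  intro i j hij
  simp only [lowProj, of_apply]
  rw [if_neg (not_le.2 hij)]

lemma trace_lowProj {n : ℕ} (M : Matrix (Fin n) (Fin n) ℂ) :
    Matrix.trace (lowProj M) = Matrix.trace M := by
  simp [Matrix.trace, Matrix.diag, lowProj]

lemma step1 {n : ℕ} (F : Matrix (Fin n) (Fin n) ℂ → ℂ)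
    (P : MvPolynomial (Fin n × Fin n) ℂ)
    (hP : ∀ s, F s = MvPolynomial.eval (fun q => s q.1 q.2) P)
    (hinv : ∀ b : Matrix (Fin n) (Fin n) ℂ, IsUT b → IsUnit b.det →
        ∀ s : Matrix (Fin n) (Fin n) ℂ, IsLT s →
          F (lowProj (b * s * b⁻¹)) = F s)
    {s : Matrix (Fin n) (Fin n) ℂ} (hs : IsLT s) :
    F s = F (Matrix.diagonal fun i => s i i) := by
  set g : Fin n × Fin n → Polynomial ℂ :=
    fun q => Polynomial.C (s q.1 q.2) * Polynomial.X ^ ((q.1 : ℕ) - (q.2 : ℕ)) with hg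
  set Q : Polynomial ℂ := MvPolynomial.eval₂ Polynomial.C g P with hQ
  have hQeval : ∀ t : ℂ,
      Q.eval t = F (Matrix.of fun i j : Fin n => t ^ ((i : ℕ) - (j : ℕ)) * s i j) := by
    intro t
    have h1 := MvPolynomial.eval₂_comp_left (Polynomial.evalRingHom t) Polynomial.C g P
    have h2 : (Polynomial.evalRingHom t).comp (Polynomial.C : ℂ →+* Polynomial ℂ)
        = RingHom.id ℂ := by
      ext a
      simp
    have h3 : ((Polynomial.evalRingHom t) ∘ g)
        = fun q : Fin n × Fin n =>
            (Matrix.of fun i j : Fin n => t ^ ((i : ℕ) - (j : ℕ)) * s i j) q.1 q.2 := by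
      funext q
      simp only [hg, Function.comp_apply, Polynomial.coe_evalRingHom, Polynomial.eval_mul,
        Polynomial.eval_pow, Polynomial.eval_C, Polynomial.eval_X, Matrix.of_apply]
      ring
    rw [hP]
    show (Polynomial.evalRingHom t) (MvPolynomial.eval₂ Polynomial.C g P) = _
    rw [h1, h2, h3, MvPolynomial.eval₂_id]
  have key : ∀ t : ℂ, t ≠ 0 → Q.eval t = F s := by
    intro t ht
    have hbUT : IsUT (Matrix.diagonal fun i : Fin n => t ^ (i : ℕ)) :=
      fun i j hij => Matrix.diagonal_apply_ne _ (ne_of_gt hij)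
    have hbinv : (Matrix.diagonal fun i : Fin n => t ^ (i : ℕ))⁻¹
        = Matrix.diagonal fun i : Fin n => (t ^ (i : ℕ))⁻¹ := by
      apply Matrix.inv_eq_right_inv
      rw [Matrix.diagonal_mul_diagonal]
      have : (fun i : Fin n => t ^ (i : ℕ) * (t ^ (i : ℕ))⁻¹) = fun _ => (1 : ℂ) := by
        funext i
        exact mul_inv_cancel₀ (pow_ne_zero _ ht)
      rw [this, Matrix.diagonal_one]
    have hdet : IsUnit (Matrix.diagonal fun i : Fin n => t ^ (i : ℕ)).det := by
      rw [Matrix.det_diagonal, isUnit_iff_ne_zero]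
      exact Finset.prod_ne_zero_iff.2 fun i _ => pow_ne_zero _ ht
    have heq : lowProj ((Matrix.diagonal fun i : Fin n => t ^ (i : ℕ)) * s
          * (Matrix.diagonal fun i : Fin n => t ^ (i : ℕ))⁻¹)
        = Matrix.of fun i j : Fin n => t ^ ((i : ℕ) - (j : ℕ)) * s i j := by
      rw [hbinv]
      ext i j
      simp only [lowProj, Matrix.of_apply, Matrix.mul_diagonal, Matrix.diagonal_mul]
      by_cases hij : j ≤ i
      · rw [if_pos hij, pow_sub₀ t ht (by exact_mod_cast hij)]
        ring
      · rw [if_neg hij, hs i j (lt_of_not_ge hij), mul_zero]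
    rw [hQeval t, ← heq]
    exact hinv _ hbUT hdet s hs
  have hconst : Q = Polynomial.C (F s) := by
    have h0 : Q - Polynomial.C (F s) = 0 := by
      apply Polynomial.eq_zero_of_infinite_isRoot
      refine ((Set.finite_singleton (0:ℂ)).infinite_compl).mono (fun x hx => ?_)
      have hx' : x ≠ 0 := hx
      show (Q - Polynomial.C (F s)).IsRoot x
      simp [Polynomial.IsRoot, key x hx']
    exact eq_of_sub_eq_zero h0
  have h00 : (Matrix.of fun i j : Fin n => (0 : ℂ) ^ ((i : ℕ) - (j : ℕ)) * s i j)
      = Matrix.diagonal fun i => s i i := by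
    ext i j
    rcases lt_trichotomy i j with h | h | h
    · have h2 : (i : ℕ) - (j : ℕ) = 0 := Nat.sub_eq_zero_of_le (le_of_lt h)
      simp [h2, hs i j h, Matrix.diagonal_apply_ne _ (ne_of_lt h)]
    · subst h
      simp
    · have h2 : (i : ℕ) - (j : ℕ) ≠ 0 := by
        have : (j : ℕ) < (i : ℕ) := h
        omega
      simp [zero_pow h2, Matrix.diagonal_apply_ne _ (ne_of_gt h)]
  have hfin := hQeval 0
  rw [h00, hconst] at hfin
  simpa using hfin

lemma stdBasis_mul_diagonal {n : ℕ} (i j : Fin n) (c : ℂ) (d : Fin n → ℂ) :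
    Matrix.single i j c * Matrix.diagonal d = Matrix.single i j (c * d j) := by
  ext a b
  rw [Matrix.mul_diagonal]
  simp only [Matrix.single, Matrix.of_apply, ite_mul, zero_mul]
  by_cases h : i = a ∧ j = b
  · obtain ⟨rfl, rfl⟩ := h
    simp
  · simp [h]

lemma diagonal_mul_stdBasis {n : ℕ} (i j : Fin n) (c : ℂ) (d : Fin n → ℂ) :
    Matrix.diagonal d * Matrix.single i j c = Matrix.single i j (d i * c) := by
  ext a b
  rw [Matrix.diagonal_mul]
  simp only [Matrix.single, Matrix.of_apply, mul_ite, mul_zero]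
  by_cases h : i = a ∧ j = b
  · obtain ⟨rfl, rfl⟩ := h
    simp
  · simp [h]

lemma lowProj_add_eq {n : ℕ} {T U : Matrix (Fin n) (Fin n) ℂ} (hT : IsLT T)
    (hU : ∀ a b : Fin n, b ≤ a → U a b = 0) : lowProj (T + U) = T := by
  ext a b
  simp only [lowProj, Matrix.of_apply, Matrix.add_apply]
  by_cases h : b ≤ a
  · rw [if_pos h, hU a b h, add_zero]
  · rw [if_neg h]
    exact (hT a b (lt_of_not_ge h)).symm

lemma transfer {n : ℕ} (F : Matrix (Fin n) (Fin n) ℂ → ℂ)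
    (P : MvPolynomial (Fin n × Fin n) ℂ)
    (hP : ∀ s, F s = MvPolynomial.eval (fun q => s q.1 q.2) P)
    (hinv : ∀ b : Matrix (Fin n) (Fin n) ℂ, IsUT b → IsUnit b.det →
        ∀ s : Matrix (Fin n) (Fin n) ℂ, IsLT s →
          F (lowProj (b * s * b⁻¹)) = F s)
    (j k : Fin n) (hjk : j < k) (c : ℂ) (d : Fin n → ℂ) :
    F (Matrix.diagonal d)
      = F (Matrix.diagonal fun i => if i = j then d j + c else if i = k then d k - c else d i) := by
  have hjk' : j ≠ k := ne_of_lt hjk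
  set d' : Fin n → ℂ := fun i => if i = j then d j + c else if i = k then d k - c else d i with hd'
  set A : Matrix (Fin n) (Fin n) ℂ := Matrix.single j k c with hA
  set N : Matrix (Fin n) (Fin n) ℂ := Matrix.single k j 1 with hN
  set D : Matrix (Fin n) (Fin n) ℂ := Matrix.diagonal d with hD
  have hAA : A * A = 0 := Matrix.single_mul_single_of_ne c j k j (Ne.symm hjk') c
  have hbb : (1 + A) * (1 - A) = 1 := by
    rw [add_mul, one_mul, mul_sub, mul_one, hAA, sub_zero]
    abel
  have hbUT : IsUT (1 + A) := by
    intro a b hlt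
    have h1 : (1 : Matrix (Fin n) (Fin n) ℂ) a b = 0 := Matrix.one_apply_ne (ne_of_gt hlt)
    have h2 : A a b = 0 := by
      apply Matrix.single_apply_of_ne
      rintro ⟨rfl, rfl⟩
      exact absurd hjk (not_lt.2 (le_of_lt hlt))
    rw [Matrix.add_apply, h1, h2, add_zero]
  have hdet : IsUnit (1 + A).det :=
    IsUnit.of_mul_eq_one _ (by rw [← Matrix.det_mul, hbb, Matrix.det_one])
  have hbinv : (1 + A)⁻¹ = 1 - A := Matrix.inv_eq_right_inv hbb
  have hsLT : IsLT (D + N) := by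
    intro a b hlt
    have h1 : D a b = 0 := Matrix.diagonal_apply_ne _ (ne_of_lt hlt)
    have h2 : N a b = 0 := by
      apply Matrix.single_apply_of_ne
      rintro ⟨rfl, rfl⟩
      exact absurd hjk (not_lt.2 (le_of_lt hlt))
    rw [Matrix.add_apply, h1, h2, add_zero]
  have hAD : A * D = Matrix.single j k (c * d k) := stdBasis_mul_diagonal j k c d
  have hDA : D * A = Matrix.single j k (d j * c) := diagonal_mul_stdBasis j k c d
  have hAN : A * N = Matrix.single j j c := by
    rw [hA, hN, Matrix.single_mul_single_same, mul_one]
  have hNA : N * A = Matrix.single k k c := by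
    rw [hA, hN, Matrix.single_mul_single_same, one_mul]
  have hADA : A * D * A = 0 := by
    rw [hAD, hA, Matrix.single_mul_single_of_ne (c * d k) j k j (Ne.symm hjk') c]
  have hANA : A * N * A = Matrix.single j k (c * c) := by
    rw [hAN, hA, Matrix.single_mul_single_same]
  have hdiag : Matrix.diagonal d'
      = D + Matrix.single j j c - Matrix.single k k c := by
    ext a b
    rw [Matrix.sub_apply, Matrix.add_apply]
    by_cases hab : a = b
    · subst hab
      rw [Matrix.diagonal_apply_eq, hD, Matrix.diagonal_apply_eq]
      by_cases h1 : a = j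
      · subst h1
        rw [Matrix.single_apply_same,
          Matrix.single_apply_of_ne _ _ _ _ _ (by rintro ⟨rfl, -⟩; exact hjk' rfl)]
        simp [hd']
      · by_cases h2 : a = k
        · subst h2
          rw [Matrix.single_apply_same,
            Matrix.single_apply_of_ne _ _ _ _ _ (by rintro ⟨rfl, -⟩; exact h1 rfl)]
          simp [hd', h1]
        · rw [Matrix.single_apply_of_ne _ _ _ _ _ (by rintro ⟨rfl, -⟩; exact h1 rfl),
            Matrix.single_apply_of_ne _ _ _ _ _ (by rintro ⟨rfl, -⟩; exact h2 rfl)]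
          simp [hd', h1, h2]
    · rw [Matrix.diagonal_apply_ne _ hab, hD, Matrix.diagonal_apply_ne _ hab,
        Matrix.single_apply_of_ne _ _ _ _ _ (by rintro ⟨rfl, rfl⟩; exact hab rfl),
        Matrix.single_apply_of_ne _ _ _ _ _ (by rintro ⟨rfl, rfl⟩; exact hab rfl)]
      ring
  have hexp : (1 + A) * (D + N) * (1 - A)
      = (Matrix.diagonal d' + N)
        + (Matrix.single j k (c * d k) - Matrix.single j k (d j * c)
            - Matrix.single j k (c * c)) := by
    have e1 : (1 + A) * (D + N) * (1 - A)
        = D + N + A * D + A * N - D * A - N * A - A * D * A - A * N * A := by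
      noncomm_ring
    rw [e1, hADA, hANA, hAD, hDA, hAN, hNA, hdiag]
    abel
  have hU : ∀ a b : Fin n, b ≤ a →
      (Matrix.single j k (c * d k) - Matrix.single j k (d j * c)
        - Matrix.single j k (c * c)) a b = 0 := by
    intro a b hba
    have hc : ¬(j = a ∧ k = b) := by
      rintro ⟨rfl, rfl⟩
      exact absurd hjk (not_lt.2 hba)
    simp only [Matrix.sub_apply, Matrix.single_apply_of_ne _ _ _ _ _ hc, sub_zero, sub_self]
  have hs'LT : IsLT (Matrix.diagonal d' + N) := by
    intro a b hlt
    have h1 : Matrix.diagonal d' a b = 0 := Matrix.diagonal_apply_ne _ (ne_of_lt hlt)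
    have h2 : N a b = 0 := by
      apply Matrix.single_apply_of_ne
      rintro ⟨rfl, rfl⟩
      exact absurd hjk (not_lt.2 (le_of_lt hlt))
    rw [Matrix.add_apply, h1, h2, add_zero]
  have hmain : F (Matrix.diagonal d' + N) = F (D + N) := by
    have := hinv (1 + A) hbUT hdet (D + N) hsLT
    rw [hbinv, hexp, lowProj_add_eq hs'LT hU] at this
    exact this
  have hdg1 : F (D + N) = F (Matrix.diagonal d) := by
    have h := step1 F P hP hinv hsLT
    have : (fun i => (D + N) i i) = d := by
      funext i
      have h2 : N i i = 0 := by
        apply Matrix.single_apply_of_ne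
        rintro ⟨rfl, rfl⟩
        exact hjk' rfl
      rw [Matrix.add_apply, h2, add_zero, hD, Matrix.diagonal_apply_eq]
    rw [this] at h
    exact h
  have hdg2 : F (Matrix.diagonal d' + N) = F (Matrix.diagonal d') := by
    have h := step1 F P hP hinv hs'LT
    have : (fun i => (Matrix.diagonal d' + N) i i) = d' := by
      funext i
      have h2 : N i i = 0 := by
        apply Matrix.single_apply_of_ne
        rintro ⟨rfl, rfl⟩
        exact hjk' rfl
      rw [Matrix.add_apply, h2, add_zero, Matrix.diagonal_apply_eq]
    rw [this] at h
    exact h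
  rw [← hdg1, ← hmain, hdg2]


/-- Stage `m` of moving all diagonal mass into slot `z`. -/
noncomputable def ver {n : ℕ} (z : Fin n) (m : ℕ) (d : Fin n → ℂ) : Fin n → ℂ :=
  fun i => if i = z
    then (∑ i' ∈ insert z (Finset.univ.filter fun i' : Fin n => (i' : ℕ) < m), d i')
    else if (i : ℕ) < m then 0 else d i

lemma accum {n : ℕ} (hn : 1 ≤ n) (F : Matrix (Fin n) (Fin n) ℂ → ℂ)
    (P : MvPolynomial (Fin n × Fin n) ℂ)
    (hP : ∀ s, F s = MvPolynomial.eval (fun q => s q.1 q.2) P)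
    (hinv : ∀ b : Matrix (Fin n) (Fin n) ℂ, IsUT b → IsUnit b.det →
        ∀ s : Matrix (Fin n) (Fin n) ℂ, IsLT s →
          F (lowProj (b * s * b⁻¹)) = F s) :
    ∀ (m : ℕ) (d : Fin n → ℂ),
      F (Matrix.diagonal d) = F (Matrix.diagonal (ver ⟨0, hn⟩ m d)) := by
  intro m
  induction m with
  | zero =>
    intro d
    have hv : ver (⟨0, hn⟩ : Fin n) 0 d = d := by
      funext i
      by_cases h : i = (⟨0, hn⟩ : Fin n)
      · subst h
        simp [ver]
      · simp [ver, h]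
    rw [hv]
  | succ m ih =>
    intro d
    rw [ih d]
    by_cases hm : m < n
    · rcases Nat.eq_zero_or_pos m with hm0 | hm0
      · subst hm0
        have hv : ver (⟨0, hn⟩ : Fin n) 1 d = ver ⟨0, hn⟩ 0 d := by
          funext i
          by_cases h : i = (⟨0, hn⟩ : Fin n)
          · subst h
            simp only [ver, if_pos rfl]
            refine Finset.sum_congr ?_ (fun x _ => rfl)
            ext x
            simp only [Finset.mem_insert, Finset.mem_filter, Finset.mem_univ, true_and,
              Fin.ext_iff, Fin.val_mk]
            omega
          · have hiz : (i : ℕ) ≠ 0 := by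
              intro hc
              exact h (Fin.ext_iff.mpr (by simp only [Fin.val_mk]; omega))
            simp only [ver, if_neg h]
            rw [if_neg (by omega), if_neg (by omega)]
        rw [hv]
      · have hzk : (⟨0, hn⟩ : Fin n) < ⟨m, hm⟩ := by
          rw [Fin.lt_def]
          exact hm0
        have h := transfer F P hP hinv ⟨0, hn⟩ ⟨m, hm⟩ hzk (d ⟨m, hm⟩) (ver ⟨0, hn⟩ m d)
        have hvk : ver (⟨0, hn⟩ : Fin n) m d ⟨m, hm⟩ = d ⟨m, hm⟩ := by
          have h1 : ((⟨m, hm⟩ : Fin n) : ℕ) < m → False := by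
            simp only [Fin.val_mk]
            omega
          have h2 : (⟨m, hm⟩ : Fin n) ≠ (⟨0, hn⟩ : Fin n) := ne_of_gt hzk
          simp only [ver, if_neg h2, if_neg h1]
        have hfun : (fun i => if i = (⟨0, hn⟩ : Fin n)
              then ver ⟨0, hn⟩ m d ⟨0, hn⟩ + d ⟨m, hm⟩
              else if i = ⟨m, hm⟩ then ver ⟨0, hn⟩ m d ⟨m, hm⟩ - d ⟨m, hm⟩
              else ver ⟨0, hn⟩ m d i)
            = ver (⟨0, hn⟩ : Fin n) (m + 1) d := by
          funext i
          by_cases h1 : i = (⟨0, hn⟩ : Fin n)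
          · rw [if_pos h1, h1]
            have hvz : ver (⟨0, hn⟩ : Fin n) m d ⟨0, hn⟩
                = ∑ i' ∈ insert (⟨0, hn⟩ : Fin n)
                    (Finset.univ.filter fun i' : Fin n => (i' : ℕ) < m), d i' := by
              simp [ver]
            have hsets : insert (⟨0, hn⟩ : Fin n)
                  (Finset.univ.filter fun i' : Fin n => (i' : ℕ) < m + 1)
                = insert (⟨m, hm⟩ : Fin n) (insert (⟨0, hn⟩ : Fin n)
                    (Finset.univ.filter fun i' : Fin n => (i' : ℕ) < m)) := by
              ext x
              simp only [Finset.mem_insert, Finset.mem_filter, Finset.mem_univ, true_and,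
                Fin.ext_iff, Fin.val_mk]
              omega
            have hnm : (⟨m, hm⟩ : Fin n) ∉ insert (⟨0, hn⟩ : Fin n)
                (Finset.univ.filter fun i' : Fin n => (i' : ℕ) < m) := by
              simp only [Finset.mem_insert, Finset.mem_filter, Finset.mem_univ, true_and,
                Fin.ext_iff, Fin.val_mk]
              omega
            have hvz' : ver (⟨0, hn⟩ : Fin n) (m + 1) d ⟨0, hn⟩
                = ∑ i' ∈ insert (⟨0, hn⟩ : Fin n)
                    (Finset.univ.filter fun i' : Fin n => (i' : ℕ) < m + 1), d i' := by
              simp [ver]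
            rw [hvz, hvz', hsets, Finset.sum_insert hnm]
            ring
          · by_cases h2 : i = (⟨m, hm⟩ : Fin n)
            · rw [if_neg h1, if_pos h2, h2, hvk, sub_self]
              have hik1 : ((⟨m, hm⟩ : Fin n) : ℕ) < m + 1 := by
                simp only [Fin.val_mk]
                omega
              have h2' : (⟨m, hm⟩ : Fin n) ≠ (⟨0, hn⟩ : Fin n) := ne_of_gt hzk
              simp only [ver, if_neg h2', if_pos hik1]
            · have him : (i : ℕ) ≠ m := by
                intro hc
                exact h2 (Fin.ext_iff.mpr (by simp only [Fin.val_mk]; omega))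
              rw [if_neg h1, if_neg h2]
              simp only [ver, if_neg h1]
              by_cases h3 : (i : ℕ) < m
              · rw [if_pos h3, if_pos (by omega)]
              · rw [if_neg h3, if_neg (by omega)]
        rw [h, hfun]
    · have hv : ver (⟨0, hn⟩ : Fin n) (m + 1) d = ver ⟨0, hn⟩ m d := by
        funext i
        have hx := i.isLt
        by_cases h : i = (⟨0, hn⟩ : Fin n)
        · subst h
          simp only [ver, if_pos rfl]
          refine Finset.sum_congr ?_ (fun x _ => rfl)
          ext x
          have hx2 := x.isLt
          simp only [Finset.mem_insert, Finset.mem_filter, Finset.mem_univ, true_and,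
            Fin.ext_iff, Fin.val_mk]
          omega
        · simp only [ver, if_neg h]
          rw [if_pos (by omega), if_pos (by omega)]
      rw [hv]

/-- `B`-invariants on `𝔟*`: for the action `b · s = π(b s b⁻¹)` of the Borel `Bₙ` on the
lower triangular matrices `𝔟*ₙ`, a polynomial function `F` is `Bₙ`-invariant iff it is a
single-variable polynomial in the trace of `s`; i.e. `ℂ[𝔟*]^B = ℂ[tr(s)]`. -/
theorem invariants_borel_on_bdual
    (n : ℕ) (hn : 1 ≤ n)
    (F : Matrix (Fin n) (Fin n) ℂ → ℂ)
    (hF : ∃ P : MvPolynomial (Fin n × Fin n) ℂ,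
      ∀ s, F s = MvPolynomial.eval (fun q => s q.1 q.2) P) :
    (∀ b : Matrix (Fin n) (Fin n) ℂ, IsUT b → IsUnit b.det →
        ∀ s : Matrix (Fin n) (Fin n) ℂ, IsLT s →
          F (lowProj (b * s * b⁻¹)) = F s) ↔
      ∃ g : Polynomial ℂ, ∀ s : Matrix (Fin n) (Fin n) ℂ, IsLT s →
        F s = Polynomial.eval (Matrix.trace s) g := by
  obtain ⟨P, hP⟩ := hF
  constructor
  · intro hinv
    set g : Polynomial ℂ := MvPolynomial.eval₂ Polynomial.C
      (fun q : Fin n × Fin n =>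
        if q.1 = (⟨0, hn⟩ : Fin n) ∧ q.2 = (⟨0, hn⟩ : Fin n) then Polynomial.X else 0) P
      with hgdef
    have hgeval : ∀ x : ℂ,
        g.eval x = F (Matrix.diagonal fun i => if i = (⟨0, hn⟩ : Fin n) then x else 0) := by
      intro x
      have h1 := MvPolynomial.eval₂_comp_left (Polynomial.evalRingHom x) Polynomial.C
        (fun q : Fin n × Fin n =>
          if q.1 = (⟨0, hn⟩ : Fin n) ∧ q.2 = (⟨0, hn⟩ : Fin n) then Polynomial.X else 0) P
      have h2 : (Polynomial.evalRingHom x).comp (Polynomial.C : ℂ →+* Polynomial ℂ)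
          = RingHom.id ℂ := by
        ext a
        simp
      have h3 : ((Polynomial.evalRingHom x) ∘ fun q : Fin n × Fin n =>
            if q.1 = (⟨0, hn⟩ : Fin n) ∧ q.2 = (⟨0, hn⟩ : Fin n) then Polynomial.X else 0)
          = fun q : Fin n × Fin n =>
            (Matrix.diagonal fun i => if i = (⟨0, hn⟩ : Fin n) then x else 0) q.1 q.2 := by
        funext q
        rcases q with ⟨a, b⟩
        dsimp only [Function.comp_apply]
        by_cases hab : a = b
        · subst hab
          rw [Matrix.diagonal_apply_eq]
          by_cases haz : a = (⟨0, hn⟩ : Fin n)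
          · simp [haz]
          · simp [haz]
        · have hcond : ¬(a = (⟨0, hn⟩ : Fin n) ∧ b = (⟨0, hn⟩ : Fin n)) := by
            rintro ⟨rfl, rfl⟩
            exact hab rfl
          simp [hcond, Matrix.diagonal_apply_ne _ hab]
      rw [hP]
      show (Polynomial.evalRingHom x) (MvPolynomial.eval₂ Polynomial.C _ P) = _
      rw [h1, h2, h3, MvPolynomial.eval₂_id]
    refine ⟨g, fun s hs => ?_⟩
    have h1 := step1 F P hP hinv hs
    have h2 := accum hn F P hP hinv n (fun i => s i i)
    have h3 : ver (⟨0, hn⟩ : Fin n) n (fun i => s i i)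
        = fun i => if i = (⟨0, hn⟩ : Fin n) then Matrix.trace s else 0 := by
      funext i
      by_cases h : i = (⟨0, hn⟩ : Fin n)
      · subst h
        simp only [ver, eq_self_iff_true, if_true]
        have huniv : insert (⟨0, hn⟩ : Fin n)
            (Finset.univ.filter fun i' : Fin n => (i' : ℕ) < n) = Finset.univ := by
          ext x
          simp [x.isLt]
        rw [huniv]
        simp [Matrix.trace, Matrix.diag]
      · simp [ver, h, i.isLt]
    rw [h1, h2, h3, ← hgeval]
  · rintro ⟨g, hg⟩ b hb hbdet s hs
    rw [hg _ (isLT_lowProj _), hg _ hs, trace_lowProj]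
    congr 1
    rw [Matrix.trace_mul_comm, ← Matrix.mul_assoc, Matrix.nonsing_inv_mul b hbdet, Matrix.one_mul]
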